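/- PQ-representation of MinSum-Weighted-BinPacking: Let d ≥ 1 item types have sizes p : Fin d → ℕ with 1 ≤ p j ≤ B, multiplicities n : Fin d → ℕ, and weights w : Fin d → ℕ; let B ≥ 1 be the bin capacity, m ≥ 1 the number of bins used, T ∈ ℕ a cost threshold, wmax = max_j w j, ntot = ∑_j n j and W = wmax · min(B, ntot). Then the following are equivalent: (1) there exists a packing y : Fin m → Fin d → ℕ with ∑_k y k j = n j for every j, ∑_j p j · y k j ≤ B for every bin k, and total cost ∑_{k} (k+1) · ( ∑_j w j · y k j ) ≤ T, where bin k ∈ Fin m has index k+1 ∈ {1,…,m}; (2) there exist, for each k ∈ Fin m, natural-number data (c^k : Fin d → ℕ, x^k : Fin m → ℕ, t^k : Fin m → ℕ, v^k ∈ ℕ, z^k ∈ ℕ) such that for every k: ∑_j p j · c^k j ≤ B, ∑_i x^k i = 1, ∑_j w j · c^k j = v^k, t^k i + W ≥ v^k + (x^k i)·W for every i ∈ Fin m, t^k i ≤ W for every i ∈ Fin m, and ∑_i (i+1) · t^k i = z^k; and globally: ∑_k c^k j = n j for every j, ∑_k x^k i = 1 for every i ∈ Fin m, and ∑_k z^k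 ≤ T. -/
import Mathlib


theorem mswbp_pq_representation (d m B T : ℕ) (hd : 1 ≤ d) (hm : 1 ≤ m) (hB : 1 ≤ B)
    (p : Fin d → ℕ) (hp : ∀ j, 1 ≤ p j ∧ p j ≤ B)
    (n w : Fin d → ℕ)
    (W : ℕ) (hW : W = Finset.univ.sup w * min B (∑ j, n j)) :
    (∃ y : Fin m → Fin d → ℕ,
      (∀ j, ∑ k, y k j = n j) ∧
      (∀ k, (∑ j, p j * y k j) ≤ B) ∧
      (∑ k : Fin m, ((k : ℕ) + 1) * ∑ j, w j * y k j) ≤ T) ↔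
    (∃ (c : Fin m → Fin d → ℕ) (x : Fin m → Fin m → ℕ) (t : Fin m → Fin m → ℕ)
        (v z : Fin m → ℕ),
      (∀ k, (∑ j, p j * c k j) ≤ B) ∧
      (∀ k, (∑ i, x k i) = 1) ∧
      (∀ k, (∑ j, w j * c k j) = v k) ∧
      (∀ k i, v k + x k i * W ≤ t k i + W) ∧
      (∀ k i, t k i ≤ W) ∧
      (∀ k, (∑ i : Fin m, ((i : ℕ) + 1) * t k i) = z k) ∧
      (∀ j, (∑ k, c k j) = n j) ∧
      (∀ i, (∑ k, x k i) = 1) ∧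
      (∑ k, z k) ≤ T) := by
  constructor
  · rintro ⟨y, hy1, hy2, hy3⟩
    have hvW : ∀ k, (∑ j, w j * y k j) ≤ W := by
      intro k
      have h1 : (∑ j, w j * y k j) ≤ ∑ j, Finset.univ.sup w * y k j :=
        Finset.sum_le_sum fun j _ =>
          Nat.mul_le_mul_right _ (Finset.le_sup (Finset.mem_univ j))
      have h2 : (∑ j, Finset.univ.sup w * y k j) = Finset.univ.sup w * ∑ j, y k j := by
        rw [Finset.mul_sum]
      have h3 : (∑ j, y k j) ≤ B := by
        calc (∑ j, y k j) ≤ ∑ j, p j * y k j :=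
              Finset.sum_le_sum fun j _ => Nat.le_mul_of_pos_left _ (hp j).1
          _ ≤ B := hy2 k
      have h4 : (∑ j, y k j) ≤ ∑ j, n j := by
        refine Finset.sum_le_sum fun j _ => ?_
        rw [← hy1 j]
        exact Finset.single_le_sum (f := fun k' => y k' j) (fun _ _ => Nat.zero_le _)
          (Finset.mem_univ k)
      calc (∑ j, w j * y k j) ≤ Finset.univ.sup w * ∑ j, y k j := h1.trans (le_of_eq h2)
        _ ≤ Finset.univ.sup w * min B (∑ j, n j) :=
            Nat.mul_le_mul_left _ (le_min h3 h4)
        _ = W := hW.symm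
    refine ⟨y, fun k i => if i = k then 1 else 0,
      fun k i => if i = k then ∑ j, w j * y k j else 0,
      fun k => ∑ j, w j * y k j,
      fun k => ((k : ℕ) + 1) * ∑ j, w j * y k j,
      hy2, ?_, fun k => rfl, ?_, ?_, ?_, hy1, ?_, hy3⟩
    · intro k; simp
    · intro k i
      by_cases h : i = k
      · simp [h]
      · simp only [h, if_false, Nat.zero_mul, Nat.add_zero, Nat.zero_add]
        exact hvW k
    · intro k i
      by_cases h : i = k
      · simp only [h, if_pos rfl]; exact hvW k
      · simp [h]
    · intro k
      rw [Finset.sum_eq_single k]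
      · simp
      · intro i _ hik; simp [hik]
      · intro h; exact absurd (Finset.mem_univ k) h
    · intro i; simp
  · rintro ⟨c, x, t, v, z, h1, h2, h3, h4, h5, h6, h7, h8, h9⟩
    have hxv : ∀ k i, x k i * v k ≤ t k i := by
      intro k i
      have hx1 : x k i ≤ 1 := by
        rw [← h2 k]
        exact Finset.single_le_sum (fun _ _ => Nat.zero_le _) (Finset.mem_univ i)
      interval_cases h : x k i
      · simp
      · have := h4 k i
        simp only [h, one_mul] at this ⊢
        omega
    refine ⟨fun i j => ∑ k, x k i * c k j, ?_, ?_, ?_⟩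
    · intro j
      rw [Finset.sum_comm]
      calc (∑ k, ∑ i, x k i * c k j) = ∑ k, (∑ i, x k i) * c k j := by
            simp [Finset.sum_mul]
        _ = ∑ k, c k j := by
            refine Finset.sum_congr rfl fun k _ => ?_
            rw [h2 k, one_mul]
        _ = n j := h7 j
    · intro i
      have key : (∑ j, p j * ∑ k, x k i * c k j) = ∑ k, x k i * ∑ j, p j * c k j := by
        simp only [Finset.mul_sum]
        rw [Finset.sum_comm]
        exact Finset.sum_congr rfl fun k _ => Finset.sum_congr rfl fun j _ => by ring
      rw [key]
      calc (∑ k, x k i * ∑ j, p j * c k j) ≤ ∑ k, x k i * B :=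
            Finset.sum_le_sum fun k _ => Nat.mul_le_mul_left _ (h1 k)
        _ = (∑ k, x k i) * B := by rw [Finset.sum_mul]
        _ = B := by rw [h8 i, one_mul]
    · have inner : ∀ i : Fin m, (∑ j, w j * ∑ k, x k i * c k j) = ∑ k, x k i * v k := by
        intro i
        simp only [Finset.mul_sum]
        rw [Finset.sum_comm]
        refine Finset.sum_congr rfl fun k _ => ?_
        rw [← h3 k, Finset.mul_sum]
        exact Finset.sum_congr rfl fun j _ => by ring
      calc (∑ i : Fin m, ((i : ℕ) + 1) * ∑ j, w j * ∑ k, x k i * c k j)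
          = ∑ i : Fin m, ∑ k, ((i : ℕ) + 1) * (x k i * v k) := by
            refine Finset.sum_congr rfl fun i _ => ?_
            rw [inner i, Finset.mul_sum]
        _ ≤ ∑ i : Fin m, ∑ k, ((i : ℕ) + 1) * t k i :=
            Finset.sum_le_sum fun i _ => Finset.sum_le_sum fun k _ =>
              Nat.mul_le_mul_left _ (hxv k i)
        _ = ∑ k, ∑ i : Fin m, ((i : ℕ) + 1) * t k i := Finset.sum_comm
        _ = ∑ k, z k := Finset.sum_congr rfl fun k _ => h6 k
        _ ≤ T := h9
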